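/- If ℓ = n·p₁ for a positive integer n, then D(nb(p₁, ℓ) ‖ nb(p₂, ℓ)) = D(bin(n, ℓ/n) ‖ bin(n, p₂)) = n·(p₁·ln(p₁/p₂) + (1−p₁)·ln((1−p₁)/(1−p₂))). -/

import Mathlib

open Finset

/-- Negative binomial point probability `P(W = k) = (Γ(ℓ+k)/(Γ(ℓ)·k!))·p^ℓ·(1−p)^k`. -/
noncomputable def nbPt (l p : ℝ) (k : ℕ) : ℝ :=
  Real.Gamma (l + k) / (Real.Gamma l * (k.factorial : ℝ)) * p ^ l * (1 - p) ^ k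

/-- Binomial point probability `P(M = k) = C(n,k)·p^k·(1−p)^(n−k)`. -/
noncomputable def binPt (n : ℕ) (p : ℝ) (k : ℕ) : ℝ :=
  (n.choose k : ℝ) * p ^ k * (1 - p) ^ (n - k)

open Real MeasureTheory Filter

noncomputable def nbC (l : ℝ) (k : ℕ) : ℝ :=
  Real.Gamma (l + k) / (Real.Gamma l * (k.factorial : ℝ))

lemma nbC_pos {l : ℝ} (hl : 0 < l) (k : ℕ) : 0 < nbC l k := by
  have h1 : (0:ℝ) < l + k := by positivity
  exact div_pos (Real.Gamma_pos_of_pos h1)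
    (mul_pos (Real.Gamma_pos_of_pos hl) (by positivity))

lemma nbC_zero {l : ℝ} (hl : 0 < l) : nbC l 0 = 1 := by
  simp [nbC, div_self (Real.Gamma_pos_of_pos hl).ne']

lemma nbC_succ {l : ℝ} (hl : 0 < l) (k : ℕ) :
    nbC l (k+1) = nbC l k * ((l + k)/(k+1)) := by
  have h0 : l + (k:ℝ) ≠ 0 := by positivity
  have hg : Real.Gamma (l + ((k:ℕ)+1 : ℕ)) = (l + k) * Real.Gamma (l + k) := by
    push_cast
    rw [show l + ((k:ℝ)+1) = (l + k) + 1 by ring, Real.Gamma_add_one h0]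
  have hG : Real.Gamma l ≠ 0 := (Real.Gamma_pos_of_pos hl).ne'
  have hf : ((k.factorial : ℝ)) ≠ 0 := by positivity
  rw [nbC, nbC, hg, Nat.factorial_succ]
  push_cast
  field_simp

lemma summable_nbC {l x : ℝ} (hl : 0 < l) (hx0 : 0 < x) (hx1 : x < 1) :
    Summable (fun k => nbC l k * x ^ k) := by
  apply summable_of_ratio_test_tendsto_lt_one hx1
  · filter_upwards with k
    exact (mul_pos (nbC_pos hl k) (pow_pos hx0 k)).ne'
  · have key : ∀ k : ℕ, ‖nbC l (k+1) * x ^ (k+1)‖ / ‖nbC l k * x ^ k‖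
        = x * (1 + (l-1)/(k+1)) := by
      intro k
      have h1 : (0:ℝ) < nbC l k * x ^ k := mul_pos (nbC_pos hl k) (pow_pos hx0 k)
      have h2 : (0:ℝ) < nbC l (k+1) * x ^ (k+1) := mul_pos (nbC_pos hl _) (pow_pos hx0 _)
      rw [Real.norm_of_nonneg h1.le, Real.norm_of_nonneg h2.le, nbC_succ hl k, pow_succ]
      have hk1 : ((k:ℝ)+1) ≠ 0 := by positivity
      have hc : nbC l k ≠ 0 := (nbC_pos hl k).ne'
      field_simp
      ring
    simp only [key]
    have h0 : Tendsto (fun k : ℕ => (l-1)/((k:ℝ)+1)) atTop (nhds 0) := by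
      apply Tendsto.div_atTop tendsto_const_nhds
      exact tendsto_atTop_add_const_right _ 1 tendsto_natCast_atTop_atTop
    have := (tendsto_const_nhds (x := x)).mul ((tendsto_const_nhds (x := (1:ℝ))).add h0)
    simpa using this

lemma tsum_nbC {l x : ℝ} (hl : 0 < l) (hx0 : 0 < x) (hx1 : x < 1) :
    ∑' k, nbC l k * x ^ k = (1 - x) ^ (-l) := by
  have hGl : (0:ℝ) < Real.Gamma l := Real.Gamma_pos_of_pos hl
  set μ : Measure ℝ := volume.restrict (Set.Ioi 0) with hμ
  set F : ℕ → ℝ → ℝ := fun k t => (x ^ k / (k.factorial : ℝ)) * (Real.exp (-t) * t ^ (l + k - 1))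
    with hF
  have hInt : ∀ k, Integrable (F k) μ := by
    intro k
    have h1 : (0:ℝ) < l + k := by positivity
    exact (Real.GammaIntegral_convergent h1).const_mul _
  have hIval : ∀ k, ∫ t, F k t ∂μ = (x ^ k / (k.factorial : ℝ)) * Real.Gamma (l + k) := by
    intro k
    have h1 : (0:ℝ) < l + k := by positivity
    rw [hF, MeasureTheory.integral_const_mul, ← Real.Gamma_eq_integral h1]
  have hIval' : ∀ k, ∫ t, F k t ∂μ = Real.Gamma l * (nbC l k * x ^ k) := by
    intro k
    rw [hIval k, nbC]
    field_simp
  have hnormval : ∀ k, (∫ t, ‖F k t‖ ∂μ) = ∫ t, F k t ∂μ := by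
    intro k
    rw [hμ]
    refine setIntegral_congr_fun measurableSet_Ioi (fun t ht => ?_)
    have : (0:ℝ) ≤ F k t := by
      have := Real.rpow_pos_of_pos (show (0:ℝ) < t from ht) (l + k - 1)
      positivity
    exact Real.norm_of_nonneg this
  have hsumnorm : Summable (fun k => ∫ t, ‖F k t‖ ∂μ) := by
    simp only [hnormval, hIval']
    exact (summable_nbC hl hx0 hx1).mul_left _
  have key := MeasureTheory.integral_tsum_of_summable_integral_norm hInt hsumnorm
  -- LHS of key
  have hLHS : ∑' k, ∫ t, F k t ∂μ = Real.Gamma l * ∑' k, nbC l k * x ^ k := by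
    simp only [hIval']
    exact tsum_mul_left
  -- pointwise sum
  have hpt : ∀ t ∈ Set.Ioi (0:ℝ), (∑' k, F k t) = t ^ (l - 1) * Real.exp (-((1-x)*t)) := by
    intro t ht
    have ht0 : (0:ℝ) < t := ht
    have h1 : ∀ k : ℕ, F k t = (Real.exp (-t) * t ^ (l-1)) * ((x*t) ^ k / (k.factorial : ℝ)) := by
      intro k
      simp only [hF]
      have : t ^ (l + k - 1) = t ^ (l - 1) * t ^ k := by
        rw [show l + (k:ℝ) - 1 = (l - 1) + k by ring, Real.rpow_add ht0,
          Real.rpow_natCast]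
      rw [this, mul_pow]
      ring
    simp only [h1]
    rw [tsum_mul_left]
    have hexp : (∑' k : ℕ, (x*t) ^ k / (k.factorial : ℝ)) = Real.exp (x*t) := by
      rw [Real.exp_eq_exp_ℝ, NormedSpace.exp_eq_tsum_div]
    rw [hexp, show -((1-x)*t) = -t + (x*t) by ring, Real.exp_add]
    ring
  have hRHS : (∫ t, (∑' k, F k t) ∂μ) = (1/(1-x)) ^ l * Real.Gamma l := by
    rw [hμ, setIntegral_congr_fun measurableSet_Ioi hpt]
    exact integral_rpow_mul_exp_neg_mul_Ioi hl (by linarith)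
  rw [hLHS, hRHS] at key
  have hx1' : (0:ℝ) < 1 - x := by linarith
  have heq : (1/(1-x) : ℝ) ^ l = (1-x) ^ (-l) := by
    rw [one_div, ← Real.rpow_neg_one (1-x), ← Real.rpow_mul hx1'.le]
    norm_num
  rw [heq, mul_comm ((1-x) ^ (-l))] at key
  exact mul_left_cancel₀ hGl.ne' key

lemma hasSum_nbC {l x : ℝ} (hl : 0 < l) (hx0 : 0 < x) (hx1 : x < 1) :
    HasSum (fun k => nbC l k * x ^ k) ((1 - x) ^ (-l)) := by
  have h := (summable_nbC hl hx0 hx1).hasSum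
  rwa [tsum_nbC hl hx0 hx1] at h

lemma hasSum_k_nbC {l x : ℝ} (hl : 0 < l) (hx0 : 0 < x) (hx1 : x < 1) :
    HasSum (fun k : ℕ => (k:ℝ) * (nbC l k * x ^ k)) (l * x * (1 - x) ^ (-(l+1))) := by
  have h1 : HasSum (fun j : ℕ => (l*x) * (nbC (l+1) j * x ^ j))
      ((l*x) * (1 - x) ^ (-(l+1))) := (hasSum_nbC (by linarith) hx0 hx1).mul_left _
  have hkey : ∀ j : ℕ, (l*x) * (nbC (l+1) j * x ^ j)
      = ((j+1 : ℕ):ℝ) * (nbC l (j+1) * x ^ (j+1)) := by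
    intro j
    have hG : Real.Gamma (l+1) = l * Real.Gamma l := by
      rw [Real.Gamma_add_one hl.ne']
    have hGl : Real.Gamma l ≠ 0 := (Real.Gamma_pos_of_pos hl).ne'
    have hj : ((j+1 : ℕ):ℝ) ≠ 0 := by positivity
    have hfac : ((j.factorial : ℝ)) ≠ 0 := by positivity
    rw [nbC, nbC, hG]
    have harg : l + ((j:ℕ)+1 : ℕ) = (l + 1) + j := by push_cast; ring
    rw [harg, Nat.factorial_succ]
    push_cast
    field_simp
    ring
  simp only [hkey] at h1
  have h2 := (hasSum_nat_add_iff (f := fun k : ℕ => (k:ℝ) * (nbC l k * x ^ k)) 1).mp h1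
  simpa using h2

lemma nbPt_eq (l p : ℝ) (k : ℕ) : nbPt l p k = (nbC l k * (1-p) ^ k) * p ^ l := by
  rw [nbPt, nbC]; ring

lemma hasSum_nbPt {l p : ℝ} (hl : 0 < l) (hp0 : 0 < p) (hp1 : p < 1) :
    HasSum (nbPt l p) 1 := by
  have h := ((hasSum_nbC hl (by linarith : (0:ℝ) < 1 - p) (by linarith)).mul_right (p ^ l))
  simp only [← nbPt_eq] at h
  have : (1 - (1 - p)) ^ (-l) * p ^ l = 1 := by
    rw [show (1 - (1-p) : ℝ) = p by ring, ← Real.rpow_add hp0]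
    norm_num
  rwa [this] at h

lemma hasSum_k_nbPt {l p : ℝ} (hl : 0 < l) (hp0 : 0 < p) (hp1 : p < 1) :
    HasSum (fun k : ℕ => (k:ℝ) * nbPt l p k) (l * (1-p) / p) := by
  have h := ((hasSum_k_nbC hl (by linarith : (0:ℝ) < 1 - p) (by linarith)).mul_right (p ^ l))
  have he : ∀ k : ℕ, (k:ℝ) * (nbC l k * (1-p) ^ k) * p ^ l = (k:ℝ) * nbPt l p k := by
    intro k; rw [nbPt_eq]; ring
  simp only [he] at h
  have : l * (1-p) * (1 - (1-p)) ^ (-(l+1)) * p ^ l = l * (1-p) / p := by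
    rw [show (1 - (1-p) : ℝ) = p by ring, mul_assoc, ← Real.rpow_add hp0]
    rw [show -(l+1) + l = -1 by ring, Real.rpow_neg_one]
    field_simp
  rwa [this] at h


lemma binPt_sum (n : ℕ) (p : ℝ) : ∑ k ∈ range (n + 1), binPt n p k = 1 := by
  have h := add_pow p (1 - p) n
  simp only [show p + (1 - p) = 1 by ring, one_pow] at h
  rw [h]
  refine Finset.sum_congr rfl (fun k _ => ?_)
  rw [binPt]; ring

lemma binPt_mean (n : ℕ) (p : ℝ) :
    ∑ k ∈ range (n + 1), (k:ℝ) * binPt n p k = n * p := by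
  cases n with
  | zero => simp [binPt]
  | succ m =>
    rw [Finset.sum_range_succ']
    simp only [Nat.cast_zero, zero_mul, add_zero]
    have hterm : ∀ i : ℕ, ((i+1 : ℕ):ℝ) * binPt (m+1) p (i+1)
        = ((m+1 : ℕ):ℝ) * p * binPt m p i := by
      intro i
      have hch : ((i:ℕ)+1) * (m+1).choose (i+1) = (m+1) * m.choose i := by
        rw [mul_comm ((i:ℕ)+1), Nat.add_one_mul_choose_eq]
      have hch' : (((m+1).choose (i+1) : ℝ)) * ((i:ℝ)+1) = ((m:ℝ)+1) * (m.choose i : ℝ) := by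
        exact_mod_cast congrArg (Nat.cast (R := ℝ)) (mul_comm ((i:ℕ)+1) _ ▸ hch)
      rw [binPt, binPt, show m + 1 - (i+1) = m - i by omega]
      push_cast
      rw [pow_succ]
      linear_combination (p ^ i * p * (1 - p) ^ (m - i)) * hch'
    simp only [hterm]
    rw [← Finset.mul_sum, binPt_sum m p]
    push_cast
    ring

lemma log_nbPt_ratio {l : ℝ} (hl : 0 < l) (k : ℕ) {p q : ℝ}
    (hp0 : 0 < p) (hp1 : p < 1) (hq0 : 0 < q) (hq1 : q < 1) :
    Real.log (nbPt l p k / nbPt l q k)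
      = l * (Real.log p - Real.log q)
        + (k:ℝ) * (Real.log (1-p) - Real.log (1-q)) := by
  have hlk : (0:ℝ) < l + k := by positivity
  have hc : (0:ℝ) < Real.Gamma (l + k) / (Real.Gamma l * (k.factorial : ℝ)) :=
    div_pos (Real.Gamma_pos_of_pos hlk)
      (mul_pos (Real.Gamma_pos_of_pos hl) (by positivity))
  have hp' : (0:ℝ) < 1 - p := by linarith
  have hq' : (0:ℝ) < 1 - q := by linarith
  have hpl : (0:ℝ) < p ^ l := Real.rpow_pos_of_pos hp0 l
  have hql : (0:ℝ) < q ^ l := Real.rpow_pos_of_pos hq0 l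
  have hpk : (0:ℝ) < (1-p) ^ k := pow_pos hp' k
  have hqk : (0:ℝ) < (1-q) ^ k := pow_pos hq' k
  have hratio : nbPt l p k / nbPt l q k = (p ^ l * (1-p) ^ k) / (q ^ l * (1-q) ^ k) := by
    rw [nbPt, nbPt]
    field_simp
  rw [hratio, Real.log_div (by positivity) (by positivity),
    Real.log_mul hpl.ne' hpk.ne', Real.log_mul hql.ne' hqk.ne',
    Real.log_rpow hp0, Real.log_rpow hq0, Real.log_pow, Real.log_pow]
  ring

lemma log_binPt_ratio {n k : ℕ} (hk : k ≤ n) {p q : ℝ}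
    (hp0 : 0 < p) (hp1 : p < 1) (hq0 : 0 < q) (hq1 : q < 1) :
    Real.log (binPt n p k / binPt n q k)
      = (k:ℝ) * (Real.log p - Real.log q)
        + ((n - k : ℕ):ℝ) * (Real.log (1-p) - Real.log (1-q)) := by
  have hC : (0:ℝ) < (n.choose k : ℝ) := by exact_mod_cast Nat.choose_pos hk
  have hp' : (0:ℝ) < 1 - p := by linarith
  have hq' : (0:ℝ) < 1 - q := by linarith
  have h1 : (0:ℝ) < p ^ k := pow_pos hp0 k
  have h2 : (0:ℝ) < q ^ k := pow_pos hq0 k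
  have h3 : (0:ℝ) < (1-p) ^ (n-k) := pow_pos hp' _
  have h4 : (0:ℝ) < (1-q) ^ (n-k) := pow_pos hq' _
  rw [binPt, binPt, Real.log_div (by positivity) (by positivity),
    Real.log_mul (by positivity) h3.ne', Real.log_mul hC.ne' h1.ne',
    Real.log_mul (by positivity) h4.ne', Real.log_mul hC.ne' h2.ne',
    Real.log_pow, Real.log_pow, Real.log_pow, Real.log_pow]
  ring

/-- If `ℓ = n·p₁` for a positive integer `n`, then
`D(nb(p₁,ℓ) ‖ nb(p₂,ℓ)) = D(bin(n, ℓ/n) ‖ bin(n, p₂))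
  = n·(p₁·ln(p₁/p₂) + (1−p₁)·ln((1−p₁)/(1−p₂)))`. -/
theorem stmt_10 (n : ℕ) (hn : 0 < n) (p₁ p₂ l : ℝ)
    (hp₁ : 0 < p₁) (hp₁' : p₁ < 1) (hp₂ : 0 < p₂) (hp₂' : p₂ < 1) (hl : l = n * p₁) :
    (∑' k : ℕ, nbPt l p₁ k * Real.log (nbPt l p₁ k / nbPt l p₂ k))
        = ∑ k ∈ range (n + 1),
            binPt n (l / n) k * Real.log (binPt n (l / n) k / binPt n p₂ k) ∧
    (∑ k ∈ range (n + 1),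
        binPt n (l / n) k * Real.log (binPt n (l / n) k / binPt n p₂ k))
      = n * (p₁ * Real.log (p₁ / p₂) + (1 - p₁) * Real.log ((1 - p₁) / (1 - p₂))) := by
  have hn' : (0:ℝ) < n := by exact_mod_cast hn
  have hl0 : 0 < l := by rw [hl]; positivity
  have hln : l / n = p₁ := by rw [hl]; field_simp
  set A : ℝ := Real.log p₁ - Real.log p₂ with hA
  set B : ℝ := Real.log (1-p₁) - Real.log (1-p₂) with hB
  have hlogA : Real.log (p₁ / p₂) = A := Real.log_div hp₁.ne' hp₂.ne'
  have hlogB : Real.log ((1-p₁) / (1-p₂)) = B :=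
    Real.log_div (by linarith) (by linarith)
  set V : ℝ := (n:ℝ) * (p₁ * A + (1 - p₁) * B) with hV
  -- binomial side
  have hbin : (∑ k ∈ range (n + 1),
      binPt n (l / n) k * Real.log (binPt n (l / n) k / binPt n p₂ k)) = V := by
    rw [hln]
    have hterm : ∀ k ∈ range (n+1),
        binPt n p₁ k * Real.log (binPt n p₁ k / binPt n p₂ k)
          = A * ((k:ℝ) * binPt n p₁ k) + ((n:ℝ) * B) * binPt n p₁ k
            - B * ((k:ℝ) * binPt n p₁ k) := by
      intro k hk
      have hk' : k ≤ n := by simpa using Nat.lt_succ_iff.mp (mem_range.mp hk)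
      rw [log_binPt_ratio hk' hp₁ hp₁' hp₂ hp₂', Nat.cast_sub hk']
      ring
    rw [Finset.sum_congr rfl hterm]
    rw [Finset.sum_sub_distrib, Finset.sum_add_distrib, ← Finset.mul_sum, ← Finset.mul_sum,
      ← Finset.mul_sum, binPt_mean, binPt_sum]
    rw [hV]; ring
  -- negative binomial side
  have hnb : (∑' k : ℕ, nbPt l p₁ k * Real.log (nbPt l p₁ k / nbPt l p₂ k)) = V := by
    have hterm : (fun k : ℕ => nbPt l p₁ k * Real.log (nbPt l p₁ k / nbPt l p₂ k))
        = fun k : ℕ => (l * A) * nbPt l p₁ k + B * ((k:ℝ) * nbPt l p₁ k) := by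
      funext k
      rw [log_nbPt_ratio hl0 k hp₁ hp₁' hp₂ hp₂']
      ring
    have hs : HasSum (fun k : ℕ => (l * A) * nbPt l p₁ k + B * ((k:ℝ) * nbPt l p₁ k))
        ((l * A) * 1 + B * (l * (1-p₁) / p₁)) :=
      ((hasSum_nbPt hl0 hp₁ hp₁').mul_left _).add
        ((hasSum_k_nbPt hl0 hp₁ hp₁').mul_left _)
    rw [hterm, hs.tsum_eq, hV, hl]
    field_simp
  refine ⟨by rw [hbin, hnb], by rw [hbin, hV, hlogA, hlogB]⟩
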